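/- Let N ≥ 4, b = N-2, v(z) = 1/N - b z, and g(z) = b z ln z + v(z) ln v(z) + (2e/(e+1))(ln N)/N on [0, 1/(N(N-2))] (with 0 ln 0 = 0). Then g(0) > 0, g(1/(N(N-2))) < 0, g'(z) = b ln(z/v(z)), and g has a unique zero in (0, 1/(N(N-2))). -/

import Mathlib

open Real Set

theorem g_unique_zero (N : ℕ) (hN : 4 ≤ N)
    (g : ℝ → ℝ)
    (hg : g = fun z => ((N : ℝ) - 2) * z * Real.log z
      + (1 / (N : ℝ) - ((N : ℝ) - 2) * z) * Real.log (1 / (N : ℝ) - ((N : ℝ) - 2) * z)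
      + (2 * Real.exp 1 / (Real.exp 1 + 1)) * Real.log N / N) :
    g 0 > 0 ∧ g (1 / ((N : ℝ) * ((N : ℝ) - 2))) < 0 ∧
    (∀ z ∈ Set.Ioo (0 : ℝ) (1 / ((N : ℝ) * ((N : ℝ) - 2))),
      HasDerivAt g (((N : ℝ) - 2)
        * Real.log (z / (1 / (N : ℝ) - ((N : ℝ) - 2) * z))) z) ∧
    ∃! z : ℝ, z ∈ Set.Ioo (0 : ℝ) (1 / ((N : ℝ) * ((N : ℝ) - 2))) ∧ g z = 0 := by
  have hN4 : (4 : ℝ) ≤ (N : ℝ) := by exact_mod_cast hN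
  set Nr : ℝ := (N : ℝ) with hNr
  have hNpos : 0 < Nr := by linarith
  have hNne : Nr ≠ 0 := ne_of_gt hNpos
  have hb2 : (2 : ℝ) ≤ Nr - 2 := by linarith
  have hbpos : 0 < Nr - 2 := by linarith
  have hbne : Nr - 2 ≠ 0 := ne_of_gt hbpos
  have hlogN : 0 < Real.log Nr := Real.log_pos (by linarith)
  have hlogb : 0 < Real.log (Nr - 2) := Real.log_pos (by linarith)
  have he1 : 1 < Real.exp 1 := by
    have := Real.exp_one_gt_d9; linarith
  have he3 : Real.exp 1 < 3 := by
    have := Real.exp_one_lt_d9; linarith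
  have hep : 0 < Real.exp 1 + 1 := by linarith
  set c : ℝ := 2 * Real.exp 1 / (Real.exp 1 + 1) with hc
  have hc1 : 1 < c := by
    rw [hc, lt_div_iff₀ hep]; linarith
  have hc2 : c < 3 / 2 := by
    rw [hc, div_lt_iff₀ hep]; linarith
  set a : ℝ := 1 / (Nr * (Nr - 2)) with ha
  set m : ℝ := 1 / (Nr * (Nr - 1)) with hm
  have hapos : 0 < a := by
    rw [ha]; positivity
  have hmpos : 0 < m := one_div_pos.mpr (mul_pos hNpos (by linarith))
  have hma : m < a := by
    rw [hm, ha]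
    apply one_div_lt_one_div_of_lt
    · exact mul_pos hNpos hbpos
    · exact mul_lt_mul_of_pos_left (by linarith) hNpos
  -- g 0 > 0
  have hg0 : g 0 > 0 := by
    rw [hg]
    simp only [mul_zero, zero_mul, Real.log_zero, sub_zero, zero_add]
    have h1 : Real.log (1 / Nr) = -Real.log Nr := by
      rw [one_div, Real.log_inv]
    rw [h1]
    have : 1 / Nr * -Real.log Nr + c * Real.log Nr / Nr
        = (c - 1) * Real.log Nr / Nr := by field_simp; ring
    rw [this]
    have : 0 < c - 1 := by linarith
    positivity
  -- g a < 0
  have hba : (Nr - 2) * a = 1 / Nr := by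
    rw [ha]; field_simp
  have hga : g a < 0 := by
    rw [hg]
    simp only
    rw [hba, sub_self, Real.log_zero, mul_zero, add_zero]
    have hloga : Real.log a = -(Real.log Nr + Real.log (Nr - 2)) := by
      rw [ha, one_div, Real.log_inv, Real.log_mul hNne hbne]
    rw [hloga]
    have hkey : (c - 1) * Real.log Nr < Real.log (Nr - 2) := by
      have h2 : (c - 1) * Real.log Nr < (1 / 2) * Real.log Nr := by
        apply mul_lt_mul_of_pos_right _ hlogN
        linarith
      have h3 : (1 / 2) * Real.log Nr ≤ Real.log (Nr - 2) := by
        have hNle : Nr ≤ (Nr - 2) ^ 2 := by nlinarith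
        have := Real.log_le_log (by positivity) hNle
        rw [Real.log_pow] at this
        push_cast at this
        linarith
      linarith
    have heq : 1 / Nr * -(Real.log Nr + Real.log (Nr - 2)) + c * Real.log Nr / Nr
        = ((c - 1) * Real.log Nr - Real.log (Nr - 2)) / Nr := by
      field_simp; ring
    rw [heq]
    apply div_neg_of_neg_of_pos _ hNpos
    linarith
  -- derivative
  have hderiv : ∀ z ∈ Set.Ioo (0 : ℝ) a,
      HasDerivAt g ((Nr - 2) * Real.log (z / (1 / Nr - (Nr - 2) * z))) z := by
    intro z hz
    obtain ⟨hz0, hza⟩ := hz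
    have hvpos : 0 < 1 / Nr - (Nr - 2) * z := by
      have : (Nr - 2) * z < (Nr - 2) * a := by
        apply mul_lt_mul_of_pos_left hza hbpos
      rw [hba] at this
      linarith
    set v : ℝ := 1 / Nr - (Nr - 2) * z with hv
    have hA : HasDerivAt (fun x : ℝ => (Nr - 2) * x * Real.log x)
        ((Nr - 2) * (Real.log z + 1)) z := by
      have := (Real.hasDerivAt_mul_log (ne_of_gt hz0)).const_mul (Nr - 2)
      simpa [mul_assoc] using this
    have hu : HasDerivAt (fun x : ℝ => 1 / Nr - (Nr - 2) * x) (-((Nr - 2) * 1)) z := by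
      exact ((hasDerivAt_id z).const_mul (Nr - 2)).const_sub (1 / Nr)
    have hB : HasDerivAt (fun x : ℝ => (1 / Nr - (Nr - 2) * x) * Real.log (1 / Nr - (Nr - 2) * x))
        ((Real.log v + 1) * (-((Nr - 2) * 1))) z :=
      HasDerivAt.comp z (Real.hasDerivAt_mul_log (ne_of_gt hvpos)) hu
    have hC : HasDerivAt (fun _ : ℝ => c * Real.log Nr / Nr) 0 z := hasDerivAt_const z _
    have htot := (hA.add hB).add hC
    rw [hg]
    refine htot.congr_deriv ?_
    rw [Real.log_div (ne_of_gt hz0) (ne_of_gt hvpos)]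
    ring
  -- deriv values
  have hderiveq : ∀ z ∈ Set.Ioo (0 : ℝ) a,
      deriv g z = (Nr - 2) * Real.log (z / (1 / Nr - (Nr - 2) * z)) := fun z hz =>
    (hderiv z hz).deriv
  have hcont : Continuous g := by
    rw [hg]
    apply Continuous.add
    apply Continuous.add
    · have : (fun z : ℝ => (Nr - 2) * z * Real.log z)
          = fun z : ℝ => (Nr - 2) * (z * Real.log z) := by
        funext x; ring
      rw [this]
      exact continuous_const.mul Real.continuous_mul_log
    · exact Real.continuous_mul_log.comp (continuous_const.sub (continuous_const.mul continuous_id))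
    · exact continuous_const
  -- sign of derivative
  have hvpos' : ∀ z ∈ Set.Ioo (0 : ℝ) a, 0 < 1 / Nr - (Nr - 2) * z := by
    intro z hz
    have : (Nr - 2) * z < (Nr - 2) * a := mul_lt_mul_of_pos_left hz.2 hbpos
    rw [hba] at this
    linarith
  have hanti : StrictAntiOn g (Set.Icc 0 m) := by
    apply strictAntiOn_of_deriv_neg (convex_Icc 0 m) hcont.continuousOn
    intro x hx
    rw [interior_Icc] at hx
    have hxa : x ∈ Set.Ioo (0 : ℝ) a := ⟨hx.1, lt_trans hx.2 hma⟩
    rw [hderiveq x hxa]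
    have hv := hvpos' x hxa
    apply mul_neg_of_pos_of_neg hbpos
    apply Real.log_neg (div_pos hx.1 hv)
    rw [div_lt_one hv]
    -- x < 1/Nr - (Nr-2)x  ⟺  x (Nr-1) < 1/Nr ⟺ x < 1/(Nr(Nr-1)) = m
    have hxm : x < m := hx.2
    rw [hm] at hxm
    have h1 : 0 < Nr * (Nr - 1) := mul_pos hNpos (by linarith)
    have h2 : x * (Nr * (Nr - 1)) < 1 := by
      calc x * (Nr * (Nr - 1)) < (1 / (Nr * (Nr - 1))) * (Nr * (Nr - 1)) :=
            mul_lt_mul_of_pos_right hxm h1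
        _ = 1 := one_div_mul_cancel (ne_of_gt h1)
    have h3 : x * Nr * (Nr - 1) < 1 := by rw [mul_assoc]; exact h2
    have hNinv : Nr * (1 / Nr) = 1 := by field_simp
    have h4 : Nr * (x + (Nr - 2) * x) < Nr * (1 / Nr) := by
      have heq : Nr * (x + (Nr - 2) * x) = x * Nr * (Nr - 1) := by ring
      rw [heq, hNinv]; exact h3
    have h5 : x + (Nr - 2) * x < 1 / Nr := (mul_lt_mul_iff_right₀ hNpos).mp h4
    linarith
  have hmono : StrictMonoOn g (Set.Icc m a) := by
    apply strictMonoOn_of_deriv_pos (convex_Icc m a) hcont.continuousOn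
    intro x hx
    rw [interior_Icc] at hx
    have hxa : x ∈ Set.Ioo (0 : ℝ) a := ⟨lt_trans hmpos hx.1, hx.2⟩
    rw [hderiveq x hxa]
    have hv := hvpos' x hxa
    apply mul_pos hbpos
    apply Real.log_pos
    rw [lt_div_iff₀ hv, one_mul]
    -- 1/Nr - (Nr-2)x < x ⟺ 1/Nr < x(Nr-1) ⟺ m < x
    have hmx : m < x := hx.1
    rw [hm] at hmx
    have h1 : 0 < Nr * (Nr - 1) := mul_pos hNpos (by linarith)
    have h2 : 1 < x * (Nr * (Nr - 1)) := by
      calc (1:ℝ) = (1 / (Nr * (Nr - 1))) * (Nr * (Nr - 1)) := (one_div_mul_cancel (ne_of_gt h1)).symm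
        _ < x * (Nr * (Nr - 1)) := mul_lt_mul_of_pos_right hmx h1
    have hNinv : Nr * (1 / Nr) = 1 := by field_simp
    have h4 : Nr * (1 / Nr) < Nr * (x + (Nr - 2) * x) := by
      have heq : Nr * (x + (Nr - 2) * x) = x * (Nr * (Nr - 1)) := by ring
      rw [heq, hNinv]; exact h2
    have h5 : 1 / Nr < x + (Nr - 2) * x := (mul_lt_mul_iff_right₀ hNpos).mp h4
    linarith
  -- g m < 0
  have hgm : g m < 0 := by
    have := hmono (Set.left_mem_Icc.mpr (le_of_lt hma))
      (Set.right_mem_Icc.mpr (le_of_lt hma)) hma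
    linarith
  -- all zeros in Ioo 0 a lie in Ioo 0 m
  have hzero_loc : ∀ z ∈ Set.Ioo (0 : ℝ) a, g z = 0 → z ∈ Set.Ioo (0 : ℝ) m := by
    intro z hz hgz
    refine ⟨hz.1, ?_⟩
    by_contra hzm
    push_neg at hzm
    rcases eq_or_lt_of_le hzm with h | h
    · rw [h] at hgm; linarith
    · have := hmono ⟨le_of_lt h, le_of_lt hz.2⟩
        (Set.right_mem_Icc.mpr (le_of_lt hma)) hz.2
      linarith
  -- existence via IVT
  have hIVT : ∃ z ∈ Set.Icc (0 : ℝ) m, g z = 0 := by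
    have hsub := intermediate_value_Icc' (le_of_lt hmpos) hcont.continuousOn
    have h0mem : (0 : ℝ) ∈ Set.Icc (g m) (g 0) := ⟨le_of_lt hgm, le_of_lt hg0⟩
    obtain ⟨z, hz, hgz⟩ := hsub h0mem
    exact ⟨z, hz, hgz⟩
  obtain ⟨z₀, hz₀, hgz₀⟩ := hIVT
  have hz₀0 : z₀ ≠ 0 := by rintro rfl; linarith
  have hz₀m : z₀ ≠ m := by rintro rfl; linarith
  have hz₀mem : z₀ ∈ Set.Ioo (0 : ℝ) a :=
    ⟨lt_of_le_of_ne hz₀.1 (Ne.symm hz₀0), lt_trans (lt_of_le_of_ne hz₀.2 hz₀m) hma⟩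
  refine ⟨hg0, hga, hderiv, z₀, ⟨hz₀mem, hgz₀⟩, ?_⟩
  intro y ⟨hy, hgy⟩
  have hy' := hzero_loc y hy hgy
  have hz₀' := hzero_loc z₀ hz₀mem hgz₀
  exact hanti.injOn (Set.mem_Icc_of_Ioo hy') (Set.mem_Icc_of_Ioo hz₀')
    (by rw [hgy, hgz₀])
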